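/- For every θ > 0 and every n ≥ 2, the depth D_n^{(θ)} of the n-th inserted node in a Hoppe tree with parameter θ has variance Var(D_n^{(θ)}) = Σ_{i=1}^{n-2} 1/(θ + i) − Σ_{i=1}^{n-2} (1/(θ + i))². -/

import Mathlib

open MeasureTheory ProbabilityTheory Real Filter Topology

noncomputable section

/-- Depth of node `i` in the Hoppe tree grown from the parent choices `U`:
`U k ω` is the parent of node `k + 2` (a node in `{1, …, k + 1}`, almost surely);
node `1` is the root. The `min` clipping is irrelevant almost surely. -/
def hoppeDepth {Ω : Type*} (U : ℕ → Ω → ℕ) (ω : Ω) : ℕ → ℕ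
  | 0 => 0
  | 1 => 0
  | n + 2 => hoppeDepth U ω (min (U n ω) (n + 1)) + 1
  decreasing_by omega

/-- The parent choices of a Hoppe tree with parameter `θ`: `U k` is the (random) parent
of node `k + 2`, the choices being independent, node `k + 2` choosing its parent among
nodes `1, …, k + 1`, namely the root `1` with probability `θ / (θ + k)` and each other
node with probability `1 / (θ + k)`. -/
structure IsHoppeParents {Ω : Type*} [MeasurableSpace Ω] (θ : ℝ) (μ : Measure Ω)
    (U : ℕ → Ω → ℕ) : Prop where
  meas : ∀ k, Measurable (U k)
  indep : iIndepFun U μ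
  root : ∀ k : ℕ, μ {ω | U k ω = 1} = ENNReal.ofReal (θ / (θ + k))
  nonroot : ∀ k j : ℕ, 2 ≤ j → j ≤ k + 1 → μ {ω | U k ω = j} = ENNReal.ofReal (1 / (θ + k))
  range : ∀ k : ℕ, μ {ω | 1 ≤ U k ω ∧ U k ω ≤ k + 1} = 1

/-- Height of the Hoppe tree with `n` nodes: maximal depth over nodes `1, …, n`. -/
def hoppeHeight {Ω : Type*} (U : ℕ → Ω → ℕ) (ω : Ω) (n : ℕ) : ℕ :=
  (Finset.Icc 1 n).sup (fun i => hoppeDepth U ω i)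

/-- Internal path length of the Hoppe tree with `n` nodes: sum of the depths of
nodes `1, …, n`. -/
def hoppePathLength {Ω : Type*} (U : ℕ → Ω → ℕ) (ω : Ω) (n : ℕ) : ℕ :=
  ∑ i ∈ Finset.Icc 1 n, hoppeDepth U ω i

/-- Number of leaves of the Hoppe tree with `n` nodes: nodes `j ∈ {1, …, n}` that are
the parent of no node `k ∈ {2, …, n}`. -/
def hoppeLeafCount {Ω : Type*} (U : ℕ → Ω → ℕ) (ω : Ω) (n : ℕ) : ℕ :=
  (@Finset.filter _ (fun j => ∀ k ∈ Finset.Icc 2 n, U (k - 2) ω ≠ j) (fun _ => Finset.decidableDforallFinset)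
    (Finset.Icc 1 n)).card

/-! ### Auxiliary lemmas -/

lemma hoppeDepth_zero {Ω : Type*} (U : ℕ → Ω → ℕ) (ω : Ω) : hoppeDepth U ω 0 = 0 := by
  rw [hoppeDepth]

lemma hoppeDepth_one {Ω : Type*} (U : ℕ → Ω → ℕ) (ω : Ω) : hoppeDepth U ω 1 = 0 := by
  rw [hoppeDepth]

lemma hoppeDepth_congr {Ω Ω' : Type*} (U : ℕ → Ω → ℕ) (V : ℕ → Ω' → ℕ) (ω : Ω) (ω' : Ω') :
    ∀ m, (∀ k, k + 2 ≤ m → U k ω = V k ω') → hoppeDepth U ω m = hoppeDepth V ω' m := by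
  intro m
  induction m using Nat.strong_induction_on with
  | _ m ih =>
    match m with
    | 0 => intro _; rw [hoppeDepth_zero, hoppeDepth_zero]
    | 1 => intro _; rw [hoppeDepth_one, hoppeDepth_one]
    | n + 2 =>
      intro h
      rw [hoppeDepth, hoppeDepth, h n le_rfl]
      congr 1
      exact ih _ (by omega) fun k hk => h k (by omega)

lemma hoppeDepth_le {Ω : Type*} (U : ℕ → Ω → ℕ) (ω : Ω) : ∀ m, hoppeDepth U ω m ≤ m := by
  intro m
  induction m using Nat.strong_induction_on with
  | _ m ih =>
    match m with
    | 0 => rw [hoppeDepth_zero]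
    | 1 => rw [hoppeDepth_one]; omega
    | n + 2 =>
      rw [hoppeDepth]
      have := ih (min (U n ω) (n+1)) (by omega)
      omega

lemma hoppeDepth_sum_repr {Ω : Type*} (U : ℕ → Ω → ℕ) (ω : Ω) (n : ℕ) :
    hoppeDepth U ω (n+2)
      = ∑ j ∈ Finset.range (n+2), if min (U n ω) (n+1) = j then hoppeDepth U ω j + 1 else 0 := by
  rw [Finset.sum_ite_eq, if_pos (Finset.mem_range.mpr (by omega)), hoppeDepth]

lemma hoppeDepth_measurable {Ω : Type*} [MeasurableSpace Ω] (U : ℕ → Ω → ℕ)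
    (hmeas : ∀ k, Measurable (U k)) : ∀ m, Measurable fun ω => hoppeDepth U ω m := by
  intro m
  induction m using Nat.strong_induction_on with
  | _ m ih =>
    match m with
    | 0 => simp only [hoppeDepth_zero]; exact measurable_const
    | 1 => simp only [hoppeDepth_one]; exact measurable_const
    | n + 2 =>
      have : (fun ω => hoppeDepth U ω (n+2))
          = fun ω => ∑ j ∈ Finset.range (n+2),
              if min (U n ω) (n+1) = j then hoppeDepth U ω j + 1 else 0 := by
        funext ω; exact hoppeDepth_sum_repr U ω n
      rw [this]
      refine Finset.measurable_sum _ fun j hj => Measurable.ite ?_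
        ((ih j (Finset.mem_range.mp hj)).add measurable_const) measurable_const
      have hmin : Measurable fun ω => min (U n ω) (n+1) :=
        (measurable_from_nat (f := fun x => min x (n+1))).comp (hmeas n)
      exact hmin (MeasurableSet.singleton j)

lemma hoppeDepth_indepFun {Ω : Type*} [MeasurableSpace Ω] {μ : Measure Ω} (U : ℕ → Ω → ℕ)
    (hmeas : ∀ k, Measurable (U k))
    (hindep : iIndepFun U μ) (n j : ℕ) (hj : j ≤ n + 1) :
    IndepFun (U n) (fun ω => hoppeDepth U ω j) μ := by
  classical
  have hd : Disjoint ({n} : Finset ℕ) (Finset.range n) := by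
    simp [Finset.disjoint_singleton_left]
  have h := hindep.indepFun_finset {n} (Finset.range n) hd hmeas
  have hL : Measurable fun u : (↥({n} : Finset ℕ) → ℕ) => u ⟨n, by simp⟩ :=
    measurable_pi_apply _
  set g : (↥(Finset.range n) → ℕ) → ℕ :=
    fun u => hoppeDepth (fun k (v : ↥(Finset.range n) → ℕ) =>
      if h : k ∈ Finset.range n then v ⟨k, h⟩ else 0) u j with hg
  have hR : Measurable g := measurable_of_countable g
  have := h.comp hL hR
  convert this using 1
  · rfl
  funext ω
  show hoppeDepth U ω j = g fun i : ↥(Finset.range n) => U i ω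
  rw [hg]
  refine hoppeDepth_congr _ _ _ _ j fun k hk => ?_
  have hkn : k ∈ Finset.range n := Finset.mem_range.mpr (by omega)
  simp [hkn]

lemma hoppeDepth_integrable {Ω : Type*} [MeasurableSpace Ω] {μ : Measure Ω}
    [IsProbabilityMeasure μ] (U : ℕ → Ω → ℕ) (hmeas : ∀ k, Measurable (U k))
    (ψ : ℕ → ℝ) (j : ℕ) : Integrable (fun ω => ψ (hoppeDepth U ω j)) μ := by
  have hm : Measurable fun ω => ψ (hoppeDepth U ω j) :=
    measurable_from_nat.comp (hoppeDepth_measurable U hmeas j)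
  refine (integrable_const (∑ k ∈ Finset.range (j+1), |ψ k|)).mono' hm.aestronglyMeasurable
    (Filter.Eventually.of_forall fun ω => ?_)
  have h1 : hoppeDepth U ω j ∈ Finset.range (j+1) :=
    Finset.mem_range.mpr (Nat.lt_succ_of_le (hoppeDepth_le U ω j))
  calc ‖ψ (hoppeDepth U ω j)‖ = |ψ (hoppeDepth U ω j)| := rfl
    _ ≤ ∑ k ∈ Finset.range (j+1), |ψ k| :=
        Finset.single_le_sum (fun k _ => abs_nonneg (ψ k)) h1

lemma hoppe_step {Ω : Type*} [MeasurableSpace Ω] {μ : Measure Ω} [IsProbabilityMeasure μ]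
    {θ : ℝ} (U : ℕ → Ω → ℕ) (hU : IsHoppeParents θ μ U) (n : ℕ) (ψ : ℕ → ℝ) :
    ∫ ω, ψ (hoppeDepth U ω (n+2)) ∂μ
      = ∑ j ∈ Finset.Icc 1 (n+1),
          (μ {ω | U n ω = j}).toReal * ∫ ω, ψ (hoppeDepth U ω j + 1) ∂μ := by
  classical
  have hsetmeas : ∀ j : ℕ, MeasurableSet {ω | U n ω = j} :=
    fun j => hU.meas n (MeasurableSet.singleton j)
  have hRmeas : MeasurableSet {ω | 1 ≤ U n ω ∧ U n ω ≤ n + 1} := by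
    have : {ω | 1 ≤ U n ω ∧ U n ω ≤ n + 1} = (U n) ⁻¹' {x | 1 ≤ x ∧ x ≤ n + 1} := rfl
    rw [this]
    exact hU.meas n (Set.to_countable _).measurableSet
  have hae : ∀ᵐ ω ∂μ, 1 ≤ U n ω ∧ U n ω ≤ n + 1 := by
    rw [ae_iff]
    exact (prob_compl_eq_zero_iff hRmeas).mpr (hU.range n)
  have hint : ∀ j : ℕ, Integrable
      (fun ω => (if U n ω = j then (1:ℝ) else 0) * ψ (hoppeDepth U ω j + 1)) μ := by
    intro j
    refine Integrable.bdd_mul (c := 1) (hoppeDepth_integrable U hU.meas (fun k => ψ (k+1)) j)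
      ((Measurable.ite (hsetmeas j) measurable_const measurable_const).aestronglyMeasurable)
      (Filter.Eventually.of_forall fun ω => ?_)
    by_cases h : U n ω = j <;> simp [h]
  have haeeq : (fun ω => ψ (hoppeDepth U ω (n+2)))
      =ᵐ[μ] fun ω => ∑ j ∈ Finset.Icc 1 (n+1),
        (if U n ω = j then (1:ℝ) else 0) * ψ (hoppeDepth U ω j + 1) := by
    filter_upwards [hae] with ω hω
    obtain ⟨h1, h2⟩ := hω
    rw [hoppeDepth, min_eq_left h2]
    simp only [ite_mul, one_mul, zero_mul]
    rw [Finset.sum_ite_eq, if_pos (Finset.mem_Icc.mpr ⟨h1, h2⟩)]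
  rw [integral_congr_ae haeeq, integral_finset_sum _ fun j _ => hint j]
  refine Finset.sum_congr rfl fun j hj => ?_
  obtain ⟨hj1, hj2⟩ := Finset.mem_Icc.mp hj
  have hind : IndepFun (fun ω => (if U n ω = j then (1:ℝ) else 0))
      (fun ω => ψ (hoppeDepth U ω j + 1)) μ := by
    have := hoppeDepth_indepFun U hU.meas hU.indep n j hj2
    exact this.comp (measurable_from_nat (f := fun x => if x = j then (1:ℝ) else 0))
      (measurable_from_nat (f := fun k => ψ (k+1)))
  have hindic : (fun ω => if U n ω = j then (1:ℝ) else 0)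
      = {ω | U n ω = j}.indicator (fun _ => (1:ℝ)) := by
    funext ω; by_cases h : U n ω = j <;> simp [h, Set.indicator_apply]
  have hXint : Integrable (fun ω => if U n ω = j then (1:ℝ) else 0) μ := by
    rw [hindic]; exact (integrable_const (1:ℝ)).indicator (hsetmeas j)
  have hmul := hind.integral_mul_eq_mul_integral hXint.aestronglyMeasurable
      (hoppeDepth_integrable U hU.meas (fun k => ψ (k+1)) j).aestronglyMeasurable
  rw [show ((fun ω => if U n ω = j then (1:ℝ) else 0) * fun ω => ψ (hoppeDepth U ω j + 1))
      = fun a => (if U n a = j then (1:ℝ) else 0) * ψ (hoppeDepth U a j + 1) from rfl] at hmul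
  rw [hmul]
  congr 1
  rw [hindic, integral_indicator_const (1:ℝ) (hsetmeas j)]
  simp [Measure.real]

/-! ### Closed forms for the first two moments -/

def hF (θ : ℝ) (m : ℕ) : ℝ := if m ≤ 1 then 0 else 1 + ∑ i ∈ Finset.Icc 1 (m-2), 1/(θ+i)
def hV (θ : ℝ) (m : ℕ) : ℝ :=
  if m ≤ 1 then 0 else ∑ i ∈ Finset.Icc 1 (m-2), (1/(θ+i) - (1/(θ+i))^2)
def hG (θ : ℝ) (m : ℕ) : ℝ := hV θ m + (hF θ m)^2

lemma hF_one (θ : ℝ) : hF θ 1 = 0 := by simp [hF]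
lemma hF_two (θ : ℝ) : hF θ 2 = 1 := by simp [hF]
lemma hG_one (θ : ℝ) : hG θ 1 = 0 := by simp [hG, hV, hF]
lemma hG_two (θ : ℝ) : hG θ 2 = 1 := by simp [hG, hV, hF]

lemma hF_succ (θ : ℝ) (n : ℕ) : hF θ (n+3) = hF θ (n+2) + 1/(θ+(n+1)) := by
  have h1 : n + 3 - 2 = (n + 1) := rfl
  have h2 : n + 2 - 2 = n := rfl
  rw [hF, hF, if_neg (by omega), if_neg (by omega), h1, h2,
    Finset.sum_Icc_succ_top (by omega : 1 ≤ n + 1)]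
  push_cast
  ring

lemma hG_succ (θ : ℝ) (n : ℕ) :
    hG θ (n+3) = hG θ (n+2) + (2 * hF θ (n+2) + 1) * (1/(θ+(n+1))) := by
  have h1 : n + 3 - 2 = (n + 1) := rfl
  have h2 : n + 2 - 2 = n := rfl
  have hVs : hV θ (n+3) = hV θ (n+2) + (1/(θ+(n+1)) - (1/(θ+(n+1)))^2) := by
    rw [hV, hV, if_neg (by omega), if_neg (by omega), h1, h2,
      Finset.sum_Icc_succ_top (by omega : 1 ≤ n + 1)]
    push_cast
    ring
  rw [hG, hG, hVs, hF_succ]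
  ring

lemma sumA (θ : ℝ) (hθ : 0 < θ) :
    ∀ n : ℕ, θ + ∑ j ∈ Finset.Icc 2 (n+1), (hF θ j + 1) = (θ + n) * hF θ (n+2) := by
  intro n
  induction n with
  | zero => simp [hF_two]
  | succ n ih =>
    rw [Finset.sum_Icc_succ_top (by omega : 2 ≤ n + 2), ← add_assoc, ih, hF_succ]
    have hne : θ + (n+1:ℝ) ≠ 0 := by positivity
    push_cast
    field_simp
    ring

lemma sumB (θ : ℝ) (hθ : 0 < θ) :
    ∀ n : ℕ, θ + ∑ j ∈ Finset.Icc 2 (n+1), (hG θ j + 2 * hF θ j + 1)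
      = (θ + n) * hG θ (n+2) := by
  intro n
  induction n with
  | zero => simp [hG_two]
  | succ n ih =>
    rw [Finset.sum_Icc_succ_top (by omega : 2 ≤ n + 2), ← add_assoc, ← add_assoc, ih,
      hG_succ θ n]
    have hne : θ + (n+1:ℝ) ≠ 0 := by positivity
    push_cast
    field_simp
    ring

/-! ### The moments of the depth -/

lemma hoppe_moments {Ω : Type*} [MeasurableSpace Ω] {μ : Measure Ω} [IsProbabilityMeasure μ]
    {θ : ℝ} (hθ : 0 < θ) (U : ℕ → Ω → ℕ) (hU : IsHoppeParents θ μ U) :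
    ∀ m, (∫ ω, ((hoppeDepth U ω m : ℝ)) ∂μ = hF θ m)
      ∧ (∫ ω, ((hoppeDepth U ω m : ℝ))^2 ∂μ = hG θ m) := by
  intro m
  induction m using Nat.strong_induction_on with
  | _ m ih =>
    match m with
    | 0 => simp [hoppeDepth_zero, hF, hG, hV]
    | 1 => simp [hoppeDepth_one, hF, hG, hV]
    | n + 2 =>
      have hθn : (0:ℝ) < θ + n := by positivity
      -- inner integrals
      have I1 : ∀ j, j ≤ n + 1 →
          ∫ ω, ((hoppeDepth U ω j + 1 : ℕ) : ℝ) ∂μ = hF θ j + 1 := by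
        intro j hj
        have heq : (fun ω => ((hoppeDepth U ω j + 1 : ℕ) : ℝ))
            = fun ω => ((hoppeDepth U ω j : ℝ)) + 1 := by
          funext ω; push_cast; ring
        rw [heq, integral_add (hoppeDepth_integrable U hU.meas (fun k => (k:ℝ)) j)
          (integrable_const 1), (ih j (by omega)).1]
        simp
      have I2 : ∀ j, j ≤ n + 1 →
          ∫ ω, (((hoppeDepth U ω j + 1 : ℕ) : ℝ))^2 ∂μ = hG θ j + 2 * hF θ j + 1 := by
        intro j hj
        have heq : (fun ω => (((hoppeDepth U ω j + 1 : ℕ) : ℝ))^2)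
            = fun ω => ((hoppeDepth U ω j : ℝ))^2 + (2*((hoppeDepth U ω j : ℝ)) + 1) := by
          funext ω; push_cast; ring
        rw [heq, integral_add (hoppeDepth_integrable U hU.meas (fun k => (k:ℝ)^2) j)
          (hoppeDepth_integrable U hU.meas (fun k => 2*(k:ℝ)+1) j), (ih j (by omega)).2,
          integral_add ((hoppeDepth_integrable U hU.meas (fun k => (k:ℝ)) j).const_mul 2)
            (integrable_const 1),
          integral_const_mul, (ih j (by omega)).1]
        simp
        ring
      -- probabilities
      have p1 : (μ {ω | U n ω = 1}).toReal = θ / (θ + n) := by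
        rw [hU.root n, ENNReal.toReal_ofReal (by positivity)]
      have pj : ∀ j, 2 ≤ j → j ≤ n + 1 → (μ {ω | U n ω = j}).toReal = 1 / (θ + n) := by
        intro j h2 h3
        rw [hU.nonroot n j h2 h3, ENNReal.toReal_ofReal (by positivity)]
      have hins : Finset.Icc 1 (n+1) = insert 1 (Finset.Icc 2 (n+1)) := by
        ext x
        simp only [Finset.mem_Icc, Finset.mem_insert]
        omega
      have hnotmem : (1:ℕ) ∉ Finset.Icc 2 (n+1) := by simp
      constructor
      · have hstep : ∫ ω, ((hoppeDepth U ω (n+2) : ℝ)) ∂μ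
            = ∑ j ∈ Finset.Icc 1 (n+1), (μ {ω | U n ω = j}).toReal
                * ∫ ω, ((hoppeDepth U ω j + 1 : ℕ) : ℝ) ∂μ :=
          hoppe_step U hU n (fun k : ℕ => (k:ℝ))
        rw [hstep]
        have hsum : ∀ j ∈ Finset.Icc 1 (n+1),
            (μ {ω | U n ω = j}).toReal * ∫ ω, ((hoppeDepth U ω j + 1 : ℕ) : ℝ) ∂μ
              = (μ {ω | U n ω = j}).toReal * (hF θ j + 1) := by
          intro j hj
          obtain ⟨_, hj2⟩ := Finset.mem_Icc.mp hj
          rw [I1 j hj2]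
        rw [Finset.sum_congr rfl hsum, hins, Finset.sum_insert hnotmem, p1,
          Finset.sum_congr rfl (fun j hj => by
            obtain ⟨h2, h3⟩ := Finset.mem_Icc.mp hj
            rw [pj j h2 h3])]
        rw [← Finset.mul_sum]
        have hS : ∑ j ∈ Finset.Icc 2 (n+1), (hF θ j + 1) = (θ + n) * hF θ (n+2) - θ := by
          have := sumA θ hθ n
          linarith
        rw [hS, hF_one]
        field_simp
        ring
      · have hstep : ∫ ω, ((hoppeDepth U ω (n+2) : ℝ))^2 ∂μ
            = ∑ j ∈ Finset.Icc 1 (n+1), (μ {ω | U n ω = j}).toReal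
                * ∫ ω, (((hoppeDepth U ω j + 1 : ℕ) : ℝ))^2 ∂μ :=
          hoppe_step U hU n (fun k : ℕ => (k:ℝ)^2)
        rw [hstep]
        have hsum : ∀ j ∈ Finset.Icc 1 (n+1),
            (μ {ω | U n ω = j}).toReal * ∫ ω, (((hoppeDepth U ω j + 1 : ℕ) : ℝ))^2 ∂μ
              = (μ {ω | U n ω = j}).toReal * (hG θ j + 2 * hF θ j + 1) := by
          intro j hj
          obtain ⟨_, hj2⟩ := Finset.mem_Icc.mp hj
          rw [I2 j hj2]
        rw [Finset.sum_congr rfl hsum, hins, Finset.sum_insert hnotmem, p1,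
          Finset.sum_congr rfl (fun j hj => by
            obtain ⟨h2, h3⟩ := Finset.mem_Icc.mp hj
            rw [pj j h2 h3])]
        rw [← Finset.mul_sum]
        have hS : ∑ j ∈ Finset.Icc 2 (n+1), (hG θ j + 2 * hF θ j + 1)
            = (θ + n) * hG θ (n+2) - θ := by
          have := sumB θ hθ n
          linarith
        rw [hS, hF_one, hG_one]
        field_simp
        ring

/-- Variance of the depth of the `n`-th node of a Hoppe tree with parameter `θ`. -/
theorem hoppe_depth_variance
    {Ω : Type*} [MeasurableSpace Ω]
    (θ : ℝ) (hθ : 0 < θ) (n : ℕ) (hn : 2 ≤ n)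
    (μ : Measure Ω) [IsProbabilityMeasure μ] (U : ℕ → Ω → ℕ) (hU : IsHoppeParents θ μ U) :
    variance (fun ω => (hoppeDepth U ω n : ℝ)) μ
      = ∑ i ∈ Finset.Icc 1 (n - 2), 1 / (θ + i)
        - ∑ i ∈ Finset.Icc 1 (n - 2), (1 / (θ + i)) ^ 2 := by
  set X : Ω → ℝ := fun ω => (hoppeDepth U ω n : ℝ) with hX
  have hXmeas : Measurable X :=
    measurable_from_nat.comp (hoppeDepth_measurable U hU.meas n)
  have hXmem : MemLp X 2 μ := by
    refine MemLp.of_bound hXmeas.aestronglyMeasurable (n : ℝ)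
      (Filter.Eventually.of_forall fun ω => ?_)
    have := hoppeDepth_le U ω n
    simp only [hX, Real.norm_eq_abs, abs_of_nonneg (by positivity : (0:ℝ) ≤ (hoppeDepth U ω n : ℝ))]
    exact_mod_cast this
  rw [variance_eq_sub hXmem]
  obtain ⟨h1, h2⟩ := hoppe_moments hθ U hU n
  have hsq : μ[X^2] = ∫ ω, ((hoppeDepth U ω n : ℝ))^2 ∂μ := rfl
  have hm : μ[X] = ∫ ω, ((hoppeDepth U ω n : ℝ)) ∂μ := rfl
  rw [hsq, hm, h1, h2]
  have : hG θ n - (hF θ n)^2 = hV θ n := by rw [hG]; ring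
  rw [this, hV, if_neg (by omega), Finset.sum_sub_distrib]

end
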